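/- For a purification φ_ρ of ρ and POVMs {Λ_x}, {Λ̃_x}: ‖(I^R ⊗ M_{Λ̃})(φ_ρ) − (I^R ⊗ M_{Λ})(φ_ρ)‖₁ = Σ_x ‖√ρ (Λ̃_x − Λ_x) √ρ‖₁. -/

import Mathlib

open Matrix BigOperators
open scoped ComplexOrder

open Classical in
noncomputable def matSqrt {d : Type*} [Fintype d] [DecidableEq d]
    (A : Matrix d d ℂ) : Matrix d d ℂ :=
  if h : A.PosSemidef then
    (h.1.eigenvectorUnitary : Matrix d d ℂ) * diagonal ((↑) ∘ (√·) ∘ h.1.eigenvalues) *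
      (star h.1.eigenvectorUnitary : Matrix d d ℂ)
  else 0

noncomputable def traceNorm {d : Type*} [Fintype d] [DecidableEq d]
    (A : Matrix d d ℂ) : ℝ :=
  (matSqrt (Aᴴ * A)).trace.re

noncomputable def pureState {d : Type*} (v : d → ℂ) : Matrix d d ℂ :=
  fun i j => v i * (starRingEnd ℂ) (v j)

noncomputable def extChannel {d X : Type*} [Fintype d] [DecidableEq X]
    (Λ : X → Matrix d d ℂ) (φ : Matrix (d × d) (d × d) ℂ) :
    Matrix (d × X) (d × X) ℂ :=
  fun p q => if p.2 = q.2 then ∑ c, ∑ c', (Λ p.2) c c' * φ (p.1, c') (q.1, c) else 0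

/- ## Auxiliary lemmas -/

open scoped MatrixOrder in
lemma matSqrt_of_posSemidef {d : Type*} [Fintype d] [DecidableEq d]
    {A : Matrix d d ℂ} (h : A.PosSemidef) : matSqrt A = CFC.sqrt A := by
  rw [matSqrt, dif_pos h, CFC.sqrt_eq_cfc, cfc_nnreal_eq_real _ A, h.1.cfc_eq]
  simp only [IsHermitian.cfc, Unitary.conjStarAlgAut_apply]
  congr 3
  funext i
  simp [Real.coe_sqrt, Real.coe_toNNReal', h.eigenvalues_nonneg i]

open scoped MatrixOrder in
lemma matSqrt_eq_of_sq {d : Type*} [Fintype d] [DecidableEq d]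
    {A B : Matrix d d ℂ} (hB : B.PosSemidef) (h : B * B = A) : matSqrt A = B := by
  have hA : A.PosSemidef := by
    have := Matrix.posSemidef_conjTranspose_mul_self B
    rwa [hB.1, h] at this
  rw [matSqrt_of_posSemidef hA]
  exact (CFC.sqrt_eq_iff A B hA.nonneg hB.nonneg).2 h

open scoped MatrixOrder in
lemma posSemidef_matSqrt {d : Type*} [Fintype d] [DecidableEq d]
    {A : Matrix d d ℂ} (h : A.PosSemidef) : (matSqrt A).PosSemidef := by
  rw [matSqrt_of_posSemidef h]; exact (CFC.sqrt_nonneg A).posSemidef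

open scoped MatrixOrder in
lemma matSqrt_mul_self {d : Type*} [Fintype d] [DecidableEq d]
    {A : Matrix d d ℂ} (h : A.PosSemidef) : matSqrt A * matSqrt A = A := by
  rw [matSqrt_of_posSemidef h]; exact CFC.sqrt_mul_sqrt_self A h.nonneg

lemma posSemidef_blockDiagonal {d X : Type*} [Fintype d] [DecidableEq d]
    [Fintype X] [DecidableEq X] {M : X → Matrix d d ℂ}
    (h : ∀ x, (M x).PosSemidef) : (Matrix.blockDiagonal M).PosSemidef := by
  have : Matrix.blockDiagonal M
      = (Matrix.blockDiagonal fun x => matSqrt (M x))ᴴ * Matrix.blockDiagonal fun x => matSqrt (M x) := by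
    rw [Matrix.blockDiagonal_conjTranspose, ← Matrix.blockDiagonal_mul]
    conv_rhs => rw [show (fun x => ((matSqrt (M x))ᴴ * matSqrt (M x))) = M from
      funext fun x => by rw [(posSemidef_matSqrt (h x)).1, matSqrt_mul_self (h x)]]
  rw [this]
  exact Matrix.posSemidef_conjTranspose_mul_self _

lemma matSqrt_blockDiagonal {d X : Type*} [Fintype d] [DecidableEq d]
    [Fintype X] [DecidableEq X] {M : X → Matrix d d ℂ}
    (h : ∀ x, (M x).PosSemidef) :
    matSqrt (Matrix.blockDiagonal M) = Matrix.blockDiagonal fun x => matSqrt (M x) := by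
  apply matSqrt_eq_of_sq
  · exact posSemidef_blockDiagonal fun x => posSemidef_matSqrt (h x)
  · rw [← Matrix.blockDiagonal_mul]
    exact congrArg _ (funext fun x => matSqrt_mul_self (h x))

lemma traceNorm_blockDiagonal {d X : Type*} [Fintype d] [DecidableEq d]
    [Fintype X] [DecidableEq X] (M : X → Matrix d d ℂ) :
    traceNorm (Matrix.blockDiagonal M) = ∑ x, traceNorm (M x) := by
  unfold traceNorm
  rw [Matrix.blockDiagonal_conjTranspose, ← Matrix.blockDiagonal_mul,
    matSqrt_blockDiagonal (fun x => Matrix.posSemidef_conjTranspose_mul_self (M x)),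
    Matrix.trace_blockDiagonal, Complex.re_sum]

lemma conjTranspose_mul_self_map_conj {d : Type*} [Fintype d] [DecidableEq d]
    (A : Matrix d d ℂ) :
    (A.map (starRingEnd ℂ))ᴴ * (A.map (starRingEnd ℂ)) = (Aᴴ * A).map (starRingEnd ℂ) := by
  ext i j
  simp only [Matrix.mul_apply, Matrix.map_apply, Matrix.conjTranspose_apply, map_sum,
    RingHom.map_mul]
  refine Finset.sum_congr rfl fun k _ => ?_
  simp [mul_comm]

lemma map_conj_posSemidef {d : Type*} [Fintype d] [DecidableEq d]
    {A : Matrix d d ℂ} (h : A.PosSemidef) : (A.map (starRingEnd ℂ)).PosSemidef := by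
  have : A.map (starRingEnd ℂ) = Aᵀ := by
    ext i j
    have := congrFun (congrFun h.1 j) i
    simp only [Matrix.conjTranspose_apply] at this
    simpa only [Matrix.map_apply, Matrix.transpose_apply, Complex.star_def] using this
  rw [this]
  exact h.transpose

lemma traceNorm_map_conj {d : Type*} [Fintype d] [DecidableEq d]
    (A : Matrix d d ℂ) : traceNorm (A.map (starRingEnd ℂ)) = traceNorm A := by
  unfold traceNorm
  rw [conjTranspose_mul_self_map_conj]
  have hN := Matrix.posSemidef_conjTranspose_mul_self A
  have hsq : matSqrt ((Aᴴ * A).map (starRingEnd ℂ)) = (matSqrt (Aᴴ * A)).map (starRingEnd ℂ) := by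
    apply matSqrt_eq_of_sq (map_conj_posSemidef (posSemidef_matSqrt hN))
    rw [← Matrix.map_mul, matSqrt_mul_self hN]
  rw [hsq]
  have : ((matSqrt (Aᴴ * A)).map (starRingEnd ℂ)).trace = star ((matSqrt (Aᴴ * A)).trace) := by
    simp [Matrix.trace, Matrix.diag, Matrix.map_apply, star_sum]
  rw [this, Complex.star_def, Complex.conj_re]

lemma extChannel_entry {d X : Type*} [Fintype d] [DecidableEq d] [Fintype X] [DecidableEq X]
    (lam : d → ℝ) (Λ : X → Matrix d d ℂ) (r r' : d) (x x' : X) :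
    extChannel Λ (pureState (fun p : d × d => if p.1 = p.2 then (Real.sqrt (lam p.1) : ℂ) else 0))
      (r, x) (r', x')
    = if x = x' then (Real.sqrt (lam r) : ℂ) * Λ x r' r * (Real.sqrt (lam r') : ℂ) else 0 := by
  unfold extChannel pureState
  by_cases h : x = x'
  · simp only [h, if_true]
    simp only [mul_ite, ite_mul, mul_zero, zero_mul, map_zero, apply_ite (starRingEnd ℂ),
      Complex.conj_ofReal]
    simp [Finset.sum_ite_eq, Finset.sum_ite_eq']
    ring
  · simp [h]

/-- Lemma 4 of Wilde et al.: For a purification of `ρ = diagonal λ` and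
POVMs `{Λ x}`, `{Λ̃ x}`,
`‖(I^R ⊗ M_Λ̃)(φ_ρ) − (I^R ⊗ M_Λ)(φ_ρ)‖₁ = ∑_x ‖√ρ (Λ̃_x − Λ_x) √ρ‖₁`. -/
theorem purified_distance_identity
    {d X : Type*} [Fintype d] [DecidableEq d] [Fintype X] [DecidableEq X]
    (lam : d → ℝ) (hlam : ∀ i, 0 ≤ lam i) (hlamsum : ∑ i, lam i = 1)
    (Λ Λt : X → Matrix d d ℂ)
    (hpos : ∀ x, (Λ x).PosSemidef) (hsum : ∑ x, Λ x = 1)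
    (hpost : ∀ x, (Λt x).PosSemidef) (hsumt : ∑ x, Λt x = 1) :
    traceNorm
        (extChannel Λt
            (pureState (fun p : d × d => if p.1 = p.2 then (Real.sqrt (lam p.1) : ℂ) else 0))
          - extChannel Λ
            (pureState (fun p : d × d => if p.1 = p.2 then (Real.sqrt (lam p.1) : ℂ) else 0)))
      = ∑ x, traceNorm
          ((Matrix.diagonal fun i => (Real.sqrt (lam i) : ℂ)) * (Λt x - Λ x) *
            (Matrix.diagonal fun i => (Real.sqrt (lam i) : ℂ))) := by
  set D : Matrix d d ℂ := Matrix.diagonal fun i => (Real.sqrt (lam i) : ℂ) with hD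
  -- the difference of the extended channels is block diagonal
  have hblock :
      (extChannel Λt
            (pureState (fun p : d × d => if p.1 = p.2 then (Real.sqrt (lam p.1) : ℂ) else 0))
          - extChannel Λ
            (pureState (fun p : d × d => if p.1 = p.2 then (Real.sqrt (lam p.1) : ℂ) else 0)))
      = Matrix.blockDiagonal (fun x => (D * (Λt x - Λ x) * D).map (starRingEnd ℂ)) := by
    ext ⟨r, x⟩ ⟨r', x'⟩
    rw [Matrix.sub_apply, extChannel_entry, extChannel_entry]
    have hherm : ∀ x : X, ((Λt x - Λ x)ᴴ = Λt x - Λ x) := fun x => by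
      rw [Matrix.conjTranspose_sub, (hpost x).1, (hpos x).1]
    by_cases h : x = x'
    · subst h
      simp only [if_true, Matrix.blockDiagonal_apply_eq, Matrix.map_apply]
      have hentry : (D * (Λt x - Λ x) * D) r r'
          = (Real.sqrt (lam r) : ℂ) * (Λt x - Λ x) r r' * (Real.sqrt (lam r') : ℂ) := by
        rw [hD, Matrix.mul_diagonal, Matrix.diagonal_mul]
      rw [hentry]
      have h1 : (starRingEnd ℂ) ((Λt x) r r') = Λt x r' r := by
        simpa only [Matrix.conjTranspose_apply, Complex.star_def] using congrFun (congrFun (hpost x).1 r') r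
      have h2 : (starRingEnd ℂ) ((Λ x) r r') = Λ x r' r := by
        simpa only [Matrix.conjTranspose_apply, Complex.star_def] using congrFun (congrFun (hpos x).1 r') r
      simp only [Matrix.sub_apply, mul_sub, sub_mul, map_sub, RingHom.map_mul,
        Complex.conj_ofReal, h1, h2]
    · simp [Matrix.blockDiagonal_apply, h]
  rw [hblock, traceNorm_blockDiagonal]
  exact Finset.sum_congr rfl fun x _ => traceNorm_map_conj _
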